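/- Assume (H1), (H2⁰) and K·L < α. Then the map H conjugates the linear and the semilinear dynamics: for all τ, t ∈ I and every ξ ∈ X, the function t ↦ H(t, Φ(t,τ)ξ) satisfies the variation-of-constants equation x(t) = Φ(t,τ)·H(τ,ξ) + ∫_τ^t Φ(t,s) F(s, x(s)) ds, and consequently H(t, Φ(t,τ)ξ) = φ(t, τ, H(τ,ξ)). -/

import Mathlib

open Set MeasureTheory Real

lemma aux_simple {X : Type*} [NormedAddCommGroup X] (F : ℝ → X → X)
    (hF : ∀ x : X, StronglyMeasurable fun t => F t x)
    (s : SimpleFunc ℝ X) :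
    StronglyMeasurable fun r => F r (s r) := by
  classical
  induction s using MeasureTheory.SimpleFunc.induction with
  | const c hs =>
    rename_i A
    have : (fun r => F r ((SimpleFunc.piecewise A hs (SimpleFunc.const ℝ c) (SimpleFunc.const ℝ 0)) r))
        = A.piecewise (fun r => F r c) (fun r => F r 0) := by
      funext r
      by_cases h : r ∈ A <;> simp [Set.piecewise, h]
    rw [this]
    exact StronglyMeasurable.piecewise hs (hF c) (hF 0)
  | add hdis hf hg =>
    rename_i f g
    have hmsupp : MeasurableSet (Function.support ⇑f) := by
      have : Function.support ⇑f = (⇑f ⁻¹' {0})ᶜ := by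
        ext r; simp [Function.mem_support]
      rw [this]
      exact (f.measurableSet_fiber 0).compl
    have : (fun r => F r ((f + g) r))
        = (Function.support ⇑f).piecewise (fun r => F r (f r)) (fun r => F r (g r)) := by
      funext r
      by_cases h : r ∈ Function.support ⇑f
      · have hg0 : g r = 0 := Function.notMem_support.mp (Set.disjoint_left.mp hdis h)
        simp [Set.piecewise, h, hg0]
      · have hf0 : f r = 0 := Function.notMem_support.mp h
        simp [Set.piecewise, h, hf0]
    rw [this]
    exact StronglyMeasurable.piecewise hmsupp hf hg

lemma aux_comp {X : Type*} [NormedAddCommGroup X] (F : ℝ → X → X)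
    (hF : ∀ x : X, StronglyMeasurable fun t => F t x)
    {u : ℝ → X} (hu : StronglyMeasurable u) {S : Set ℝ}
    (hc : ∀ᵐ r ∂(volume.restrict S), Continuous (F r)) :
    AEStronglyMeasurable (fun r => F r (u r)) (volume.restrict S) := by
  apply aestronglyMeasurable_of_tendsto_ae Filter.atTop
    (fun n => (aux_simple F hF (hu.approx n)).aestronglyMeasurable)
  filter_upwards [hc] with r hr
  exact (hr.tendsto (u r)).comp (hu.tendsto_approx r)


theorem statement6
    {X : Type*} [NormedAddCommGroup X] [NormedSpace ℝ X] [CompleteSpace X]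
    (τ₀ : ℝ)
    (Nt : ℝ → X → ℝ)
    (hNadd : ∀ t : ℝ, ∀ x y : X, Nt t (x + y) ≤ Nt t x + Nt t y)
    (hNsmul : ∀ t : ℝ, ∀ c : ℝ, ∀ x : X, Nt t (c • x) = |c| * Nt t x)
    (ℓ : ℝ → ℝ)
    (hℓpos : ∀ t ∈ Set.Ici τ₀, 0 < ℓ t)
    (hℓloc : ∀ a b : ℝ, ∃ C : ℝ, ∀ t ∈ Set.Icc a b ∩ Set.Ici τ₀, ℓ t ≤ C)
    (hNequiv : ∀ t ∈ Set.Ici τ₀, ∀ x : X, (1 / ℓ t) * ‖x‖ ≤ Nt t x ∧ Nt t x ≤ ℓ t * ‖x‖)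
    (Φ : ℝ → ℝ → X →L[ℝ] X)
    (hΦcont : ContinuousOn (fun p : ℝ × ℝ => Φ p.1 p.2) (Set.Ici τ₀ ×ˢ Set.Ici τ₀))
    (hΦid : ∀ t ∈ Set.Ici τ₀, Φ t t = ContinuousLinearMap.id ℝ X)
    (hΦcomp : ∀ t ∈ Set.Ici τ₀, ∀ r ∈ Set.Ici τ₀, ∀ s ∈ Set.Ici τ₀,
      Φ t s = (Φ t r).comp (Φ r s))
    (K α : ℝ) (hK : 1 ≤ K) (hα : 0 < α)
    (hH1 : ∀ s ∈ Set.Ici τ₀, ∀ t ∈ Set.Ici τ₀, s ≤ t → ∀ x : X,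
      Nt t (Φ t s x) ≤ K * Real.exp (-α * (t - s)) * Nt s x)
    (F : ℝ → X → X)
    (hFmeas : ∀ x : X, StronglyMeasurable (fun t => F t x))
    (hFcont : ∀ᵐ t ∂(volume.restrict (Set.Ici τ₀)), Continuous (F t))
    (L M : ℝ) (hL : 0 ≤ L) (hM : 0 ≤ M)
    (hH2 : ∀ᵐ t ∂(volume.restrict (Set.Ici τ₀)),
      F t 0 = 0 ∧ (∀ x : X, Nt t (F t x) ≤ M) ∧
        (∀ x y : X, Nt t (F t x - F t y) ≤ L * Nt t (x - y)))
    (sol : ℝ → ℝ → X → X)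
    (hsolCont : ContinuousOn (fun p : ℝ × ℝ × X => sol p.1 p.2.1 p.2.2)
      (Set.Ici τ₀ ×ˢ Set.Ici τ₀ ×ˢ (Set.univ : Set X)))
    (hsolId : ∀ τ ∈ Set.Ici τ₀, ∀ x : X, sol τ τ x = x)
    (hsolGrp : ∀ t₀ ∈ Set.Ici τ₀, ∀ t₁ ∈ Set.Ici τ₀, ∀ t₂ ∈ Set.Ici τ₀, ∀ x : X,
      sol t₂ t₀ x = sol t₂ t₁ (sol t₁ t₀ x))
    (hVOC : ∀ s ∈ Set.Ici τ₀, ∀ t ∈ Set.Ici τ₀, ∀ η : X,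
      sol t s η = Φ t s η + ∫ r in s..t, Φ t r (F r (sol r s η)))
    (huniq : ∀ τ ∈ Set.Ici τ₀, ∀ x : ℝ → X, ContinuousOn x (Set.Ici τ₀) →
      (∀ t ∈ Set.Ici τ₀, x t = Φ t τ (x τ) + ∫ r in τ..t, Φ t r (F r (x r))) →
      ∀ t ∈ Set.Ici τ₀, x t = sol t τ (x τ))
    (hKL : K * L < α)
    (φstar : ℝ → X → ℝ → X)
    (hφstarBC : ∀ τ ∈ Set.Ici τ₀, ∀ ξ : X, ContinuousOn (φstar τ ξ) (Set.Ici τ₀) ∧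
      ∃ C : ℝ, ∀ t ∈ Set.Ici τ₀, Nt t (φstar τ ξ t) ≤ C)
    (hφstarFix : ∀ τ ∈ Set.Ici τ₀, ∀ ξ : X, ∀ t ∈ Set.Ici τ₀,
      φstar τ ξ t = ∫ s in τ₀..t, Φ t s (F s (φstar τ ξ s + Φ s τ ξ)))
    (hφstarUniq : ∀ τ ∈ Set.Ici τ₀, ∀ ξ : X, ∀ ψ : ℝ → X, ContinuousOn ψ (Set.Ici τ₀) →
      (∃ C : ℝ, ∀ t ∈ Set.Ici τ₀, Nt t (ψ t) ≤ C) →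
      (∀ t ∈ Set.Ici τ₀, ψ t = ∫ s in τ₀..t, Φ t s (F s (ψ s + Φ s τ ξ))) →
      ∀ t ∈ Set.Ici τ₀, ψ t = φstar τ ξ t)
    :
    ∀ τ ∈ Set.Ici τ₀, ∀ ξ : X, ∀ t ∈ Set.Ici τ₀,
      (Φ t τ ξ + φstar t (Φ t τ ξ) t
        = Φ t τ (ξ + φstar τ ξ τ)
          + ∫ s in τ..t, Φ t s (F s (Φ s τ ξ + φstar s (Φ s τ ξ) s))) ∧
      Φ t τ ξ + φstar t (Φ t τ ξ) t = sol t τ (ξ + φstar τ ξ τ) := by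

  have hτ₀ : τ₀ ∈ Set.Ici τ₀ := le_refl τ₀
  intro τ hτ ξ
  -- the combined function
  set x : ℝ → X := fun s => Φ s τ ξ + φstar τ ξ s with hxdef
  -- key identity: φstar s (Φ s τ ξ) = φstar τ ξ on I
  have key : ∀ s ∈ Set.Ici τ₀, ∀ u ∈ Set.Ici τ₀, φstar τ ξ u = φstar s (Φ s τ ξ) u := by
    intro s hs
    refine hφstarUniq s hs (Φ s τ ξ) (φstar τ ξ) (hφstarBC τ hτ ξ).1 (hφstarBC τ hτ ξ).2 ?_
    intro u hu
    rw [hφstarFix τ hτ ξ u hu]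
    apply intervalIntegral.integral_congr
    intro r hr
    rw [Set.uIcc_of_le hu] at hr
    have hr' : r ∈ Set.Ici τ₀ := hr.1
    have hco := hΦcomp r hr' s hs τ hτ
    show (Φ u r) (F r (φstar τ ξ r + (Φ r τ) ξ)) = (Φ u r) (F r (φstar τ ξ r + (Φ r s) ((Φ s τ) ξ)))
    rw [hco]; rfl
  -- continuity of x on I
  have hΦcont1 : ∀ t ∈ Set.Ici τ₀, ContinuousOn (fun r => Φ t r) (Set.Ici τ₀) := by
    intro t ht
    have h1 : ContinuousOn (fun r : ℝ => ((t, r) : ℝ × ℝ)) (Set.Ici τ₀) :=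
      (continuous_const.prodMk continuous_id).continuousOn
    exact hΦcont.comp h1 (fun r hr => ⟨ht, hr⟩)
  have hΦcont2 : ContinuousOn (fun s => Φ s τ) (Set.Ici τ₀) := by
    have h1 : ContinuousOn (fun s : ℝ => ((s, τ) : ℝ × ℝ)) (Set.Ici τ₀) :=
      (continuous_id.prodMk continuous_const).continuousOn
    exact hΦcont.comp h1 (fun s hs => ⟨hs, hτ⟩)
  have hxcont : ContinuousOn x (Set.Ici τ₀) := by
    apply ContinuousOn.add
    · exact isBoundedBilinearMap_apply.continuous.comp_continuousOn
        (hΦcont2.prodMk (continuous_const.continuousOn))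
    · exact (hφstarBC τ hτ ξ).1
  -- extended continuous version of x
  have hxt : Continuous (fun s => x (max s τ₀)) := by
    exact hxcont.comp_continuous (continuous_id.max continuous_const) (fun s => Set.mem_Ici.mpr (le_max_right _ _))
  -- interval integrability
  have hint : ∀ a ∈ Set.Ici τ₀, ∀ b ∈ Set.Ici τ₀, ∀ t ∈ Set.Ici τ₀,
      IntervalIntegrable (fun r => Φ t r (F r (x r))) volume a b := by
    intro a ha b hb t ht
    rw [intervalIntegrable_iff]
    have hsub : Set.uIoc a b ⊆ Set.Ici τ₀ := by
      intro r hr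
      exact le_of_lt (lt_of_le_of_lt (le_min ha hb) hr.1)
    have hsubc : Set.uIcc a b ⊆ Set.Ici τ₀ := by
      intro r hr
      exact le_trans (le_min ha hb) hr.1
    have hmeasS : MeasurableSet (Set.uIoc a b) := measurableSet_uIoc
    have hH2' := ae_restrict_of_ae_restrict_of_subset hsub hH2
    have hFcont' := ae_restrict_of_ae_restrict_of_subset hsub hFcont
    -- measurability
    have hmF : AEStronglyMeasurable (fun r => F r (x (max r τ₀))) (volume.restrict (Set.uIoc a b)) :=
      aux_comp F hFmeas hxt.stronglyMeasurable hFcont'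
    have hmF' : AEStronglyMeasurable (fun r => F r (x r)) (volume.restrict (Set.uIoc a b)) := by
      apply hmF.congr
      filter_upwards [ae_restrict_mem hmeasS] with r hr
      rw [max_eq_left (hsub hr)]
    have hmΦ : AEStronglyMeasurable (fun r => Φ t r) (volume.restrict (Set.uIoc a b)) :=
      ((hΦcont1 t ht).mono hsub).aestronglyMeasurable hmeasS
    have hm : AEStronglyMeasurable (fun r => Φ t r (F r (x r))) (volume.restrict (Set.uIoc a b)) :=
      isBoundedBilinearMap_apply.continuous.comp_aestronglyMeasurable (hmΦ.prodMk hmF')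
    -- bounds
    obtain ⟨C₂, hC₂⟩ := hℓloc (min a b) (max a b)
    obtain ⟨C₁, hC₁⟩ := isCompact_uIcc.exists_bound_of_continuousOn ((hΦcont1 t ht).mono hsubc)
    apply Integrable.mono' (g := fun _ => (max C₁ 0) * (C₂ * M))
      ((integrableOn_const_iff).mpr (Or.inr measure_Ioc_lt_top)) hm
    filter_upwards [hH2', ae_restrict_mem hmeasS] with r hr hrmem
    have hrI : r ∈ Set.Ici τ₀ := hsub hrmem
    have hℓr := hℓpos r hrI
    have hℓC : ℓ r ≤ C₂ := hC₂ r ⟨⟨le_of_lt hrmem.1, hrmem.2⟩, hrI⟩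
    have hNb : Nt r (F r (x r)) ≤ M := hr.2.1 (x r)
    have hFb : ‖F r (x r)‖ ≤ C₂ * M := by
      have h1 : (1 / ℓ r) * ‖F r (x r)‖ ≤ Nt r (F r (x r)) := (hNequiv r hrI (F r (x r))).1
      have h2 : ‖F r (x r)‖ ≤ ℓ r * M := by
        have := le_trans h1 hNb
        calc ‖F r (x r)‖ = ℓ r * ((1 / ℓ r) * ‖F r (x r)‖) := by field_simp
          _ ≤ ℓ r * M := mul_le_mul_of_nonneg_left this (le_of_lt hℓr)
      exact le_trans h2 (mul_le_mul_of_nonneg_right hℓC hM)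
    have hΦb : ‖Φ t r‖ ≤ max C₁ 0 := le_trans (hC₁ _ (Set.uIoc_subset_uIcc hrmem)) (le_max_left _ _)
    calc ‖Φ t r (F r (x r))‖ ≤ ‖Φ t r‖ * ‖F r (x r)‖ := (Φ t r).le_opNorm _
      _ ≤ (max C₁ 0) * (C₂ * M) :=
        mul_le_mul hΦb hFb (norm_nonneg _) (le_max_right _ _)
  -- variation of constants for x
  have e1 : ∀ u ∈ Set.Ici τ₀, φstar τ ξ u = ∫ r in τ₀..u, Φ u r (F r (x r)) := by
    intro u hu
    rw [hφstarFix τ hτ ξ u hu]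
    apply intervalIntegral.integral_congr
    intro r hr
    show (Φ u r) (F r (φstar τ ξ r + (Φ r τ) ξ)) = (Φ u r) (F r (x r))
    have : φstar τ ξ r + Φ r τ ξ = x r := add_comm _ _
    rw [this]
  have hxτ : x τ = ξ + φstar τ ξ τ := by
    show Φ τ τ ξ + φstar τ ξ τ = ξ + φstar τ ξ τ
    rw [hΦid τ hτ]
    rfl
  have voc : ∀ t ∈ Set.Ici τ₀, x t = Φ t τ (x τ) + ∫ r in τ..t, Φ t r (F r (x r)) := by
    intro t ht
    have e2 : Φ t τ (φstar τ ξ τ) = ∫ r in τ₀..τ, Φ t r (F r (x r)) := by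
      rw [e1 τ hτ, ← ContinuousLinearMap.intervalIntegral_comp_comm _ (hint τ₀ hτ₀ τ hτ τ hτ)]
      apply intervalIntegral.integral_congr
      intro r hr
      rw [Set.uIcc_of_le hτ] at hr
      have hr' : r ∈ Set.Ici τ₀ := hr.1
      have hco := hΦcomp t ht τ hτ r hr'
      show Φ t τ (Φ τ r (F r (x r))) = Φ t r (F r (x r))
      rw [hco]; rfl
    have e3 := intervalIntegral.integral_add_adjacent_intervals
      (hint τ₀ hτ₀ τ hτ t ht) (hint τ hτ t ht t ht)
    have : x t = Φ t τ ξ + ∫ r in τ₀..t, Φ t r (F r (x r)) := by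
      show Φ t τ ξ + φstar τ ξ t = Φ t τ ξ + ∫ r in τ₀..t, Φ t r (F r (x r))
      rw [e1 t ht]
    rw [this, hxτ, map_add, ← e3, ← e2]
    abel
  -- conclusion
  intro t ht
  have hLHS : Φ t τ ξ + φstar t (Φ t τ ξ) t = x t := by
    show _ = Φ t τ ξ + φstar τ ξ t
    rw [← key t ht t ht]
  have hIcc : Set.uIcc τ t ⊆ Set.Ici τ₀ := fun r hr => le_trans (le_min hτ ht) hr.1
  have hInt : (∫ s in τ..t, Φ t s (F s (Φ s τ ξ + φstar s (Φ s τ ξ) s)))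
      = ∫ s in τ..t, Φ t s (F s (x s)) := by
    apply intervalIntegral.integral_congr
    intro s hs
    have hs' : s ∈ Set.Ici τ₀ := hIcc hs
    show (Φ t s) (F s ((Φ s τ) ξ + φstar s ((Φ s τ) ξ) s)) = (Φ t s) (F s (x s))
    rw [← key s hs' s hs']
  constructor
  · rw [hLHS, hInt, ← hxτ]
    exact voc t ht
  · rw [hLHS, ← hxτ]
    exact huniq τ hτ x hxcont voc t ht
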